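/- arXiv:2305.13153 — 6 statements merged into one kernel-verified Lean document; each statement's English description precedes it below -/
import Mathlib

section
/- Let d, p be positive integers, let L1, L2 : ℝ^d × ℝ^p → ℝ, let Λ ⊆ ℝ^p, and let α > 0. Assume: (a) L1(ω, λ) ≥ 0 for all (ω, λ); (b) λ* ∈ Λ and u* ∈ ℝ^d is a minimizer of u ↦ L2(u, λ*); (c) λ̂ ∈ Λ, û ∈ ℝ^d is a minimizer of u ↦ L2(u, λ̂), and (ω̂, λ̂) is optimal for the penalized outer problem, i.e. for every λ ∈ Λ, every ω ∈ ℝ^d and every minimizer u_λ of u ↦ L2(u, λ) one has L1(ω̂, λ̂) + α(L2(ω̂, λ̂) − L2(û, λ̂)) ≤ L1(ω, λ) + α(L2(ω, λ) − L2(u_λ, λ)). Then 0 ≤ L2(ω̂, λ̂) − L2(û, λ̂) ≤ L1(u*, λ*)/α. -/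
noncomputable section

/-- first claim of the bilevel–minimax equivalence theorem. -/
theorem minimax_penalty_gap_bound
    (d p : ℕ) (hd : 0 < d) (hp : 0 < p)
    (L1 L2 : EuclideanSpace ℝ (Fin d) → EuclideanSpace ℝ (Fin p) → ℝ)
    (Λ : Set (EuclideanSpace ℝ (Fin p)))
    (α : ℝ) (hα : 0 < α)
    (hL1nonneg : ∀ ω lam, 0 ≤ L1 ω lam)
    (lamStar : EuclideanSpace ℝ (Fin p)) (uStar : EuclideanSpace ℝ (Fin d))
    (hlamStar : lamStar ∈ Λ)
    (huStar : ∀ u, L2 uStar lamStar ≤ L2 u lamStar)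
    (lamHat : EuclideanSpace ℝ (Fin p)) (uHat ωHat : EuclideanSpace ℝ (Fin d))
    (hlamHat : lamHat ∈ Λ)
    (huHat : ∀ u, L2 uHat lamHat ≤ L2 u lamHat)
    (hopt : ∀ lam ∈ Λ, ∀ ω : EuclideanSpace ℝ (Fin d),
      ∀ ulam : EuclideanSpace ℝ (Fin d), (∀ u, L2 ulam lam ≤ L2 u lam) →
        L1 ωHat lamHat + α * (L2 ωHat lamHat - L2 uHat lamHat)
          ≤ L1 ω lam + α * (L2 ω lam - L2 ulam lam)) :
    0 ≤ L2 ωHat lamHat - L2 uHat lamHat ∧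
      L2 ωHat lamHat - L2 uHat lamHat ≤ L1 uStar lamStar / α := by
  constructor
  · have := huHat ωHat
    linarith
  · have h := hopt lamStar hlamStar uStar uStar huStar
    have h1 := hL1nonneg ωHat lamHat
    rw [le_div_iff₀ hα]
    nlinarith
end
end

section
/- Let d, p be positive integers, let L1, L2 : ℝ^d × ℝ^p → ℝ, let Λ ⊆ ℝ^p, let α > 0, and let M > 0, r > 0, L̂1 ≥ 0. Assume: (a) L1(ω, λ) ≥ 0 for all (ω, λ); (b) for every λ, the map ω ↦ L1(ω, λ) is L̂1-Lipschitz; (c) for every λ ∈ Λ the function u ↦ L2(u, λ) has a unique minimizer, denoted u*(λ); (d) λ* ∈ Λ minimizes λ ↦ L1(u*(λ), λ) over Λ, and u* = u*(λ*); (e) λ̂ ∈ Λ, û = u*(λ̂), and (ω̂, λ̂) satisfies L1(ω̂, λ̂) + α(L2(ω̂, λ̂) − L2(û, λ̂)) ≤ L1(ω, λ) + α(L2(ω, λ) − L2(u*(λ), λ)) for all ω ∈ ℝ^d, λ ∈ Λ; (f) error-bound condition: ‖ω̂ − û‖^r ≤ M·(L2(ω̂, λ̂) − L2(û, λ̂)).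 Then L1(u*, λ*) − L̂1 · (M·L1(u*, λ*)/α)^{1/r} ≤ L1(ω̂, λ̂) ≤ L1(u*, λ*). -/
noncomputable section

/-- second claim of the bilevel–minimax equivalence theorem. -/
theorem minimax_penalty_value_bound
    (d p : ℕ) (hd : 0 < d) (hp : 0 < p)
    (L1 L2 : EuclideanSpace ℝ (Fin d) → EuclideanSpace ℝ (Fin p) → ℝ)
    (Λ : Set (EuclideanSpace ℝ (Fin p)))
    (α M r L1hat : ℝ) (hα : 0 < α) (hM : 0 < M) (hr : 0 < r) (hL1hat : 0 ≤ L1hat)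
    (hL1nonneg : ∀ ω lam, 0 ≤ L1 ω lam)
    (hL1lip : ∀ ω ω' lam, |L1 ω lam - L1 ω' lam| ≤ L1hat * ‖ω - ω'‖)
    (uStarFun : EuclideanSpace ℝ (Fin p) → EuclideanSpace ℝ (Fin d))
    (huStarFun : ∀ lam ∈ Λ, (∀ u, L2 (uStarFun lam) lam ≤ L2 u lam) ∧
      ∀ u, (∀ v, L2 u lam ≤ L2 v lam) → u = uStarFun lam)
    (lamStar : EuclideanSpace ℝ (Fin p)) (hlamStar : lamStar ∈ Λ)
    (hlamStarOpt : ∀ lam ∈ Λ, L1 (uStarFun lamStar) lamStar ≤ L1 (uStarFun lam) lam)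
    (lamHat : EuclideanSpace ℝ (Fin p)) (hlamHat : lamHat ∈ Λ)
    (ωHat : EuclideanSpace ℝ (Fin d))
    (hopt : ∀ ω : EuclideanSpace ℝ (Fin d), ∀ lam ∈ Λ,
      L1 ωHat lamHat + α * (L2 ωHat lamHat - L2 (uStarFun lamHat) lamHat)
        ≤ L1 ω lam + α * (L2 ω lam - L2 (uStarFun lam) lam))
    (herr : ‖ωHat - uStarFun lamHat‖ ^ r
      ≤ M * (L2 ωHat lamHat - L2 (uStarFun lamHat) lamHat)) :
    L1 (uStarFun lamStar) lamStar -
        L1hat * (M * L1 (uStarFun lamStar) lamStar / α) ^ (1 / r)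
      ≤ L1 ωHat lamHat ∧ L1 ωHat lamHat ≤ L1 (uStarFun lamStar) lamStar := by
  set V := L1 (uStarFun lamStar) lamStar with hV
  set gap := L2 ωHat lamHat - L2 (uStarFun lamHat) lamHat with hgap
  have hgap0 : 0 ≤ gap := by
    have := (huStarFun lamHat hlamHat).1 ωHat
    simp only [hgap]; linarith
  have hkey := hopt (uStarFun lamStar) lamStar hlamStar
  simp only [sub_self, mul_zero, add_zero] at hkey
  have hαgap : 0 ≤ α * gap := mul_nonneg hα.le hgap0
  have hupper : L1 ωHat lamHat ≤ V := by linarith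
  refine ⟨?_, hupper⟩
  -- α * gap ≤ V
  have hαgapV : α * gap ≤ V := by
    have := hL1nonneg ωHat lamHat
    linarith
  have hgapV : gap ≤ V / α := by
    rw [le_div_iff₀ hα]; linarith [hαgapV]
  have hMgap : M * gap ≤ M * V / α := by
    rw [div_eq_mul_inv, mul_assoc, ← div_eq_mul_inv]
    exact mul_le_mul_of_nonneg_left hgapV hM.le
  have hnorm : ‖ωHat - uStarFun lamHat‖ ^ r ≤ M * V / α := le_trans herr hMgap
  have hrne : r ≠ 0 := hr.ne'
  have h1r : 0 ≤ 1 / r := by positivity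
  have hnn : (0:ℝ) ≤ ‖ωHat - uStarFun lamHat‖ ^ r := Real.rpow_nonneg (norm_nonneg _) r
  have hnormle : ‖ωHat - uStarFun lamHat‖ ≤ (M * V / α) ^ (1 / r) := by
    have := Real.rpow_le_rpow hnn hnorm h1r
    rwa [one_div, Real.rpow_rpow_inv (norm_nonneg _) hrne, ← one_div] at this
  have hlip := hL1lip (uStarFun lamHat) ωHat lamHat
  rw [norm_sub_rev] at hlip
  have hlip' : L1 (uStarFun lamHat) lamHat - L1 ωHat lamHat ≤ L1hat * ‖ωHat - uStarFun lamHat‖ :=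
    le_trans (le_abs_self _) hlip
  have hVle : V ≤ L1 (uStarFun lamHat) lamHat := hlamStarOpt lamHat hlamHat
  have hfinal : L1hat * ‖ωHat - uStarFun lamHat‖ ≤ L1hat * (M * V / α) ^ (1 / r) :=
    mul_le_mul_of_nonneg_left hnormle hL1hat
  linarith

end
end

section
/- Let d be a positive integer, ℓ10 ≥ 0, μ2 > 0, α > 0. Let f, g : ℝ^d → ℝ be differentiable, with ‖∇f(x)‖ ≤ ℓ10 for all x (e.g. f is ℓ10-Lipschitz) and g μ2-strongly convex. Let ω* be a minimizer of g (so ∇g(ω*) = 0), and let ω_α be a stationary point of f + α·g, i.e. ∇f(ω_α) + α∇g(ω_α) = 0. Then ‖ω_α − ω*‖ ≤ ℓ10/(μ2·α). -/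
noncomputable section

open scoped RealInnerProductSpace

/-- distance between the penalized stationary point and the exact
minimizer of the strongly convex inner objective. -/
theorem penalized_minimizer_close
    (d : ℕ) (hd : 0 < d) (ℓ10 μ2 α : ℝ)
    (hℓ10 : 0 ≤ ℓ10) (hμ2 : 0 < μ2) (hα : 0 < α)
    (f g : EuclideanSpace ℝ (Fin d) → ℝ)
    (hf : Differentiable ℝ f) (hg : Differentiable ℝ g)
    (hgradf : ∀ x, ‖gradient f x‖ ≤ ℓ10)
    (hsc : ∀ x y, g x ≥ g y + ⟪gradient g y, x - y⟫ + μ2 / 2 * ‖x - y‖ ^ 2)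
    (ωstar ωα : EuclideanSpace ℝ (Fin d))
    (hωstar : ∀ x, g ωstar ≤ g x)
    (hωα : gradient f ωα + α • gradient g ωα = 0) :
    ‖ωα - ωstar‖ ≤ ℓ10 / (μ2 * α) := by
  set Δ := ωα - ωstar with hΔ
  set r := ‖Δ‖ with hr
  have hr0 : 0 ≤ r := norm_nonneg _
  -- gradient of g vanishes at the minimizer
  have hmin : IsLocalMin g ωstar := Filter.Eventually.of_forall hωstar
  have hfd : fderiv ℝ g ωstar = 0 := hmin.fderiv_eq_zero
  have hg0 : gradient g ωstar = 0 := by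
    simp [gradient, hfd]
  -- strong convexity both ways
  have h1 := hsc ωα ωstar
  have h2 := hsc ωstar ωα
  rw [hg0] at h1
  simp only [inner_zero_left] at h1
  have hnorm : ‖ωstar - ωα‖ = r := by rw [hr, hΔ, ← neg_sub, norm_neg]
  have hin : ⟪gradient g ωα, ωstar - ωα⟫ = - ⟪gradient g ωα, Δ⟫ := by
    rw [hΔ, ← inner_neg_right, neg_sub]
  rw [hnorm, hin] at h2
  have hkey : μ2 * r ^ 2 ≤ ⟪gradient g ωα, Δ⟫ := by nlinarith [h1, h2]
  -- relate gradient g ωα to gradient f ωα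
  have hga : α • gradient g ωα = - gradient f ωα :=
    eq_neg_of_add_eq_zero_left (by rw [add_comm]; exact hωα)
  have hcs : - ⟪gradient f ωα, Δ⟫ ≤ ℓ10 * r :=
    calc - ⟪gradient f ωα, Δ⟫ ≤ |⟪gradient f ωα, Δ⟫| := neg_le_abs _
      _ ≤ ‖gradient f ωα‖ * r := abs_real_inner_le_norm _ _
      _ ≤ ℓ10 * r := mul_le_mul_of_nonneg_right (hgradf ωα) hr0
  have hmain : α * (μ2 * r ^ 2) ≤ ℓ10 * r := by
    have h3 : α * ⟪gradient g ωα, Δ⟫ = - ⟪gradient f ωα, Δ⟫ := by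
      rw [← real_inner_smul_left, hga, inner_neg_left]
    have h4 : α * (μ2 * r ^ 2) ≤ α * ⟪gradient g ωα, Δ⟫ :=
      mul_le_mul_of_nonneg_left hkey hα.le
    rw [h3] at h4
    exact h4.trans hcs
  rw [le_div_iff₀ (by positivity : 0 < μ2 * α)]
  rcases eq_or_lt_of_le hr0 with h0 | hpos
  · rw [← h0]; simpa using hℓ10
  · nlinarith
end
end

section
/- Let L1, L2 : ℝ^d × ℝ^p → ℝ, α > 0, ℓ10 ≥ 0, ℓ21 ≥ 0, μ2 > 0. Suppose for every λ ∈ ℝ^p: (a) ω ↦ L1(ω, λ) is ℓ10-Lipschitz; (b) ω ↦ L2(ω, λ) is differentiable, μ2-strongly convex, and its gradient is ℓ21-Lipschitz; (c) u*(λ) is the minimizer of ω ↦ L2(ω, λ); (d) ω*_α(λ) minimizes ω ↦ L1(ω, λ) + αL2(ω, λ) and satisfies ∇_ω L1(ω*_α(λ), λ) + α∇_ω L2(ω*_α(λ), λ) = 0. Define the bilevel value function 𝓛(λ) = L1(u*(λ), λ) and the penalized value function Γ^α(λ) = L1(ω*_α(λ), λ) + α(L2(ω*_α(λ), λ) − L2(u*(λ),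 λ)). Then for every λ, |𝓛(λ) − Γ^α(λ)| ≤ (ℓ10²/(μ2·α))·(1 + ℓ21/(2μ2)). -/
noncomputable section

open scoped RealInnerProductSpace

/-- value gap between the bilevel value function and the
penalized value function, `|𝓛(λ) − Γ^α(λ)| ≤ (ℓ10²/(μ2 α))(1 + ℓ21/(2 μ2))`. -/
theorem value_function_gap
    (d p : ℕ) (hd : 0 < d) (hp : 0 < p)
    (L1 L2 : EuclideanSpace ℝ (Fin d) → EuclideanSpace ℝ (Fin p) → ℝ)
    (α ℓ10 ℓ21 μ2 : ℝ)
    (hα : 0 < α) (hℓ10 : 0 ≤ ℓ10) (hℓ21 : 0 ≤ ℓ21) (hμ2 : 0 < μ2)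
    (hL1lip : ∀ lam ω ω', |L1 ω lam - L1 ω' lam| ≤ ℓ10 * ‖ω - ω'‖)
    (hL2diff : ∀ lam, Differentiable ℝ fun ω => L2 ω lam)
    (hL2sc : ∀ lam x y, L2 x lam ≥ L2 y lam +
      ⟪gradient (fun ω => L2 ω lam) y, x - y⟫ + μ2 / 2 * ‖x - y‖ ^ 2)
    (hL2grad : ∀ lam x y,
      ‖gradient (fun ω => L2 ω lam) x - gradient (fun ω => L2 ω lam) y‖ ≤ ℓ21 * ‖x - y‖)
    (uStar ωα : EuclideanSpace ℝ (Fin p) → EuclideanSpace ℝ (Fin d))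
    (huStar : ∀ lam u, L2 (uStar lam) lam ≤ L2 u lam)
    (hωαmin : ∀ lam ω, L1 (ωα lam) lam + α * L2 (ωα lam) lam ≤ L1 ω lam + α * L2 ω lam)
    (hωαstat : ∀ lam, gradient (fun ω => L1 ω lam + α * L2 ω lam) (ωα lam) = 0) :
    ∀ lam, |L1 (uStar lam) lam -
        (L1 (ωα lam) lam + α * (L2 (ωα lam) lam - L2 (uStar lam) lam))|
      ≤ ℓ10 ^ 2 / (μ2 * α) * (1 + ℓ21 / (2 * μ2)) := by
  intro lam
  set u := uStar lam
  set w := ωα lam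
  -- gradient of L2 at the minimizer is zero
  have hloc : IsLocalMin (fun ω => L2 ω lam) u :=
    Filter.Eventually.of_forall (fun x => huStar lam x)
  have hgrad0 : gradient (fun ω => L2 ω lam) u = 0 := by
    have := hloc.fderiv_eq_zero
    simp [gradient, this]
  -- strong convexity at u
  have hsc := hL2sc lam w u
  rw [hgrad0] at hsc
  simp only [inner_zero_left] at hsc
  have hnn : (0:ℝ) ≤ μ2 / 2 * ‖w - u‖ ^ 2 := by positivity
  -- upper bound Γ - 𝓛 ≤ 0
  have hup : L1 w lam + α * L2 w lam ≤ L1 u lam + α * L2 u lam := hωαmin lam u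
  -- Lipschitz bound
  have hlip : L1 u lam - L1 w lam ≤ ℓ10 * ‖u - w‖ :=
    le_trans (le_abs_self _) (hL1lip lam u w)
  have hnormeq : ‖u - w‖ = ‖w - u‖ := by rw [← norm_neg]; congr 1; abel
  rw [hnormeq] at hlip
  set r := ‖w - u‖ with hr
  have hr0 : 0 ≤ r := norm_nonneg _
  -- key quadratic bound
  have hkey : ℓ10 * r - α * (μ2 / 2 * r ^ 2) ≤ ℓ10 ^ 2 / (2 * μ2 * α) := by
    rw [le_div_iff₀ (show (0:ℝ) < 2 * μ2 * α by positivity)]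
    nlinarith [sq_nonneg (ℓ10 - α * μ2 * r), mul_pos hμ2 hα]
  have hRHS : ℓ10 ^ 2 / (2 * μ2 * α) ≤ ℓ10 ^ 2 / (μ2 * α) * (1 + ℓ21 / (2 * μ2)) := by
    have h1 : ℓ10 ^ 2 / (2 * μ2 * α) ≤ ℓ10 ^ 2 / (μ2 * α) := by
      apply div_le_div_of_nonneg_left (by positivity) (by positivity)
      nlinarith
    calc ℓ10 ^ 2 / (2 * μ2 * α) ≤ ℓ10 ^ 2 / (μ2 * α) := h1
      _ ≤ ℓ10 ^ 2 / (μ2 * α) * (1 + ℓ21 / (2 * μ2)) := by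
        nlinarith [div_nonneg (sq_nonneg ℓ10) (le_of_lt (mul_pos hμ2 hα)),
          div_nonneg hℓ21 (by positivity : (0:ℝ) ≤ 2 * μ2)]
  have hRHS0 : (0:ℝ) ≤ ℓ10 ^ 2 / (μ2 * α) * (1 + ℓ21 / (2 * μ2)) := by positivity
  rw [abs_le]
  constructor
  · -- Γ - 𝓛 ≤ 0 ≤ RHS
    nlinarith [mul_le_mul_of_nonneg_left hsc (le_of_lt hα)]
  · -- 𝓛 - Γ ≤ ℓ10 r - α μ/2 r² ≤ RHS
    have h2 : α * (μ2 / 2 * r ^ 2) ≤ α * (L2 w lam - L2 u lam) := by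
      apply mul_le_mul_of_nonneg_left _ (le_of_lt hα)
      linarith [hsc]
    linarith [hkey, hlip, hRHS, h2]


end
end

section
/- Let d be a positive integer, ℓ10 ≥ 0, μ2 > 0, and 0 < a ≤ b. Let f, g : ℝ^d → ℝ be differentiable with ‖∇f(x)‖ ≤ ℓ10 for all x and g μ2-strongly convex. Let ω_a, ω_b ∈ ℝ^d be stationary points of f + a·g and f + b·g respectively, i.e. ∇f(ω_a) + a∇g(ω_a) = 0 and ∇f(ω_b) + b∇g(ω_b) = 0. Then ‖ω_a − ω_b‖ ≤ 2ℓ10/(μ2·a). -/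
noncomputable section

open scoped RealInnerProductSpace

/-- drift bound between penalized stationary points at two
successive penalty values. -/
theorem penalized_minimizer_drift
    (d : ℕ) (hd : 0 < d) (ℓ10 μ2 a b : ℝ)
    (hℓ10 : 0 ≤ ℓ10) (hμ2 : 0 < μ2) (ha : 0 < a) (hab : a ≤ b)
    (f g : EuclideanSpace ℝ (Fin d) → ℝ)
    (hf : Differentiable ℝ f) (hg : Differentiable ℝ g)
    (hgradf : ∀ x, ‖gradient f x‖ ≤ ℓ10)
    (hsc : ∀ x y, g x ≥ g y + ⟪gradient g y, x - y⟫ + μ2 / 2 * ‖x - y‖ ^ 2)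
    (ωa ωb : EuclideanSpace ℝ (Fin d))
    (hωa : gradient f ωa + a • gradient g ωa = 0)
    (hωb : gradient f ωb + b • gradient g ωb = 0) :
    ‖ωa - ωb‖ ≤ 2 * ℓ10 / (μ2 * a) := by
  set u := ωa - ωb with hu
  have hb : 0 < b := lt_of_lt_of_le ha hab
  -- express gradients of g via gradients of f
  have hga : gradient g ωa = -(a⁻¹ • gradient f ωa) := by
    have h : a • gradient g ωa = -gradient f ωa := by
      rw [eq_neg_iff_add_eq_zero, add_comm]; exact hωa
    rw [← smul_neg, ← h, smul_smul, inv_mul_cancel₀ ha.ne', one_smul]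
  have hgb : gradient g ωb = -(b⁻¹ • gradient f ωb) := by
    have h : b • gradient g ωb = -gradient f ωb := by
      rw [eq_neg_iff_add_eq_zero, add_comm]; exact hωb
    rw [← smul_neg, ← h, smul_smul, inv_mul_cancel₀ hb.ne', one_smul]
  -- strong monotonicity from strong convexity
  have h1 := hsc ωa ωb
  have h2 := hsc ωb ωa
  have hmono : μ2 * ‖u‖ ^ 2 ≤ ⟪gradient g ωa - gradient g ωb, u⟫ := by
    have hnorm : ‖ωb - ωa‖ = ‖u‖ := by rw [hu, norm_sub_rev]
    have h3 : ⟪gradient g ωa, ωb - ωa⟫ = -⟪gradient g ωa, u⟫ := by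
      rw [hu, ← inner_neg_right, neg_sub]
    rw [inner_sub_left]
    rw [hnorm, h3] at h2
    nlinarith [h1, h2]
  set p := ⟪gradient f ωa, u⟫ with hp
  set q := ⟪gradient f ωb, u⟫ with hq
  set n := ‖u‖ with hn
  have hn0 : 0 ≤ n := norm_nonneg u
  -- Cauchy–Schwarz bounds
  have hcs1 : |p| ≤ ℓ10 * n := by
    calc |p| ≤ ‖gradient f ωa‖ * ‖u‖ := abs_real_inner_le_norm _ _
      _ ≤ ℓ10 * n := by gcongr; exact hgradf ωa
  have hcs2 : |q| ≤ ℓ10 * n := by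
    calc |q| ≤ ‖gradient f ωb‖ * ‖u‖ := abs_real_inner_le_norm _ _
      _ ≤ ℓ10 * n := by gcongr; exact hgradf ωb
  have hib : ⟪gradient g ωa - gradient g ωb, u⟫ = -(a⁻¹ * p) + b⁻¹ * q := by
    rw [inner_sub_left, hga, hgb, inner_neg_left, inner_neg_left,
      real_inner_smul_left, real_inner_smul_left]
    ring
  rw [hib] at hmono
  clear hib h1 h2 hp hq hn
  clear_value p q n
  have ha' : (0:ℝ) < a⁻¹ := by positivity
  have hb' : (0:ℝ) < b⁻¹ := by positivity
  have hinv : b⁻¹ ≤ a⁻¹ := by gcongr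
  have hnn : (0:ℝ) ≤ ℓ10 * n := by positivity
  have h1' : -(a⁻¹ * p) ≤ a⁻¹ * (ℓ10 * n) := by
    have hp' : -p ≤ ℓ10 * n := (neg_le_abs p).trans hcs1
    calc -(a⁻¹ * p) = a⁻¹ * (-p) := by ring
      _ ≤ a⁻¹ * (ℓ10 * n) := mul_le_mul_of_nonneg_left hp' ha'.le
  have h2' : b⁻¹ * q ≤ a⁻¹ * (ℓ10 * n) := by
    have hq' : q ≤ ℓ10 * n := (le_abs_self q).trans hcs2
    calc b⁻¹ * q ≤ b⁻¹ * (ℓ10 * n) := mul_le_mul_of_nonneg_left hq' hb'.le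
      _ ≤ a⁻¹ * (ℓ10 * n) := mul_le_mul_of_nonneg_right hinv hnn
  have hbound : μ2 * n ^ 2 ≤ 2 * ℓ10 * a⁻¹ * n := by
    have := add_le_add h1' h2'
    have heq : a⁻¹ * (ℓ10 * n) + a⁻¹ * (ℓ10 * n) = 2 * ℓ10 * a⁻¹ * n := by ring
    linarith
  rcases eq_or_lt_of_le hn0 with h0 | h0
  · rw [← h0]; positivity
  · rw [le_div_iff₀ (by positivity)]
    have hdiv : μ2 * n ≤ 2 * ℓ10 * a⁻¹ := by
      refine le_of_mul_le_mul_right ?_ h0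
      calc μ2 * n * n = μ2 * n ^ 2 := by ring
        _ ≤ 2 * ℓ10 * a⁻¹ * n := hbound
    calc n * (μ2 * a) = μ2 * n * a := by ring
      _ ≤ 2 * ℓ10 * a⁻¹ * a := mul_le_mul_of_nonneg_right hdiv ha.le
      _ = 2 * ℓ10 := by field_simp

end
end

section
/- Let L1, L2 : ℝ^d × ℝ^p → ℝ be twice continuously differentiable, let α > 0, ℓ10, ℓ11, ℓ21, ℓ22 ≥ 0, μ2 > 0, and fix λ ∈ ℝ^p. Assume: (a) ‖∇L1‖ ≤ ℓ10 everywhere and ∇L1 is ℓ11-Lipschitz; (b) u ↦ L2(u, λ) is μ2-strongly convex and ∇L2 is ℓ21-Lipschitz; (c) the Hessian of L2 is ℓ22-Lipschitz, in the sense that for all u, ω: ‖∇_λ L2(ω, λ) − ∇_λ L2(u, λ) − ∇²_{λu}L2(u, λ)(ω − u)‖ ≤ (ℓ22/2)‖ω − u‖² and ‖∇_u L2(ω, λ) − ∇_u L2(u, λ) − ∇²_{uu}L2(u, λ)(ω − u)‖ ≤ (ℓ22/2)‖ω − u‖²; (d) u* = u*(λ) minimizes L2(·, λ), the Hessian H =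 ∇²_{uu}L2(u*, λ) is an invertible linear map with ‖H⁻¹‖ ≤ 1/μ2, and the cross Hessian J = ∇²_{λu}L2(u*, λ) satisfies ‖J‖ ≤ ℓ21; (e) ω*_α = ω*_α(λ) satisfies ∇_ω L1(ω*_α, λ) + α∇_ω L2(ω*_α, λ) = 0 and ‖ω*_α − u*‖ ≤ ℓ10/(μ2·α). Define the hypergradient h = ∇_λ L1(u*, λ) − J H⁻¹ ∇_u L1(u*, λ) and the penalized gradient g = ∇_λ L1(ω*_α, λ) + α(∇_λ L2(ω*_α, λ) − ∇_λ L2(u*, λ)). Then ‖h − g‖ ≤ (ℓ11 + ℓ10ℓ22/(2μ2))·(1 + ℓ21/μ2)·ℓ10/(μ2·α). -/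
noncomputable section

open scoped RealInnerProductSpace


private lemma key_identity {E F : Type*} [NormedAddCommGroup E] [NormedSpace ℝ E]
    [NormedAddCommGroup F] [NormedSpace ℝ F]
    (J : E →L[ℝ] F) (Hinv H : E →L[ℝ] E) (a1 b1 a2 b2 : F) (c1 d1 d2 δ : E) (α : ℝ)
    (hinvH : ∀ x, Hinv (H x) = x) (hF2 : d1 + α • d2 = 0) :
    (a1 - J (Hinv c1)) - (b1 + α • (b2 - a2)) =
      (a1 - b1) + J (Hinv ((d1 - c1) + α • (d2 - H δ))) - α • (b2 - a2 - J δ) := by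
  have h1 : Hinv ((d1 - c1) + α • (d2 - H δ)) = -(α • δ) - Hinv c1 := by
    have hx : (d1 - c1) + α • (d2 - H δ) = -(α • (H δ)) - c1 + (d1 + α • d2) := by module
    rw [hx, hF2, add_zero, map_sub, map_neg, map_smul, hinvH]
  rw [h1, map_sub, map_neg, map_smul]
  module

set_option maxHeartbeats 1000000 in
/-- the hypergradient of the bilevel value function is within
O(κ³/α) of the gradient of the penalized value function. -/
theorem hypergradient_penalized_gradient_gap
    (d p : ℕ) (hd : 0 < d) (hp : 0 < p)
    (L1 L2 : EuclideanSpace ℝ (Fin d) → EuclideanSpace ℝ (Fin p) → ℝ)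
    (α ℓ10 ℓ11 ℓ21 ℓ22 μ2 : ℝ)
    (hα : 0 < α) (hℓ10 : 0 ≤ ℓ10) (hℓ11 : 0 ≤ ℓ11) (hℓ21 : 0 ≤ ℓ21)
    (hℓ22 : 0 ≤ ℓ22) (hμ2 : 0 < μ2)
    (hL1smooth : ContDiff ℝ 2 fun q : EuclideanSpace ℝ (Fin d) × EuclideanSpace ℝ (Fin p) =>
      L1 q.1 q.2)
    (hL2smooth : ContDiff ℝ 2 fun q : EuclideanSpace ℝ (Fin d) × EuclideanSpace ℝ (Fin p) =>
      L2 q.1 q.2)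
    (lam : EuclideanSpace ℝ (Fin p))
    -- (a): ‖∇L1‖ ≤ ℓ10 and ∇L1 is ℓ11-Lipschitz (partial gradients, at the fixed λ)
    (hgu1bdd : ∀ u, ‖gradient (fun v => L1 v lam) u‖ ≤ ℓ10)
    (hgl1bdd : ∀ u, ‖gradient (fun l => L1 u l) lam‖ ≤ ℓ10)
    (hgu1lip : ∀ u u',
      ‖gradient (fun v => L1 v lam) u - gradient (fun v => L1 v lam) u'‖ ≤ ℓ11 * ‖u - u'‖)
    (hgl1lip : ∀ u u',
      ‖gradient (fun l => L1 u l) lam - gradient (fun l => L1 u' l) lam‖ ≤ ℓ11 * ‖u - u'‖)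
    -- (b): u ↦ L2(u, λ) is μ2-strongly convex and ∇L2 is ℓ21-Lipschitz
    (hsc : ∀ x y, L2 x lam ≥ L2 y lam +
      ⟪gradient (fun v => L2 v lam) y, x - y⟫ + μ2 / 2 * ‖x - y‖ ^ 2)
    (hgu2lip : ∀ u u',
      ‖gradient (fun v => L2 v lam) u - gradient (fun v => L2 v lam) u'‖ ≤ ℓ21 * ‖u - u'‖)
    (hgl2lip : ∀ u u',
      ‖gradient (fun l => L2 u l) lam - gradient (fun l => L2 u' l) lam‖ ≤ ℓ21 * ‖u - u'‖)
    -- (c): the Hessian of L2 is ℓ22-Lipschitz, expressed as Taylor remainder bounds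
    (Hf : EuclideanSpace ℝ (Fin d) →
      (EuclideanSpace ℝ (Fin d) →L[ℝ] EuclideanSpace ℝ (Fin d)))
    (Jf : EuclideanSpace ℝ (Fin d) →
      (EuclideanSpace ℝ (Fin d) →L[ℝ] EuclideanSpace ℝ (Fin p)))
    (hJtaylor : ∀ u ω,
      ‖gradient (fun l => L2 ω l) lam - gradient (fun l => L2 u l) lam - Jf u (ω - u)‖
        ≤ ℓ22 / 2 * ‖ω - u‖ ^ 2)
    (hHtaylor : ∀ u ω,
      ‖gradient (fun v => L2 v lam) ω - gradient (fun v => L2 v lam) u - Hf u (ω - u)‖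
        ≤ ℓ22 / 2 * ‖ω - u‖ ^ 2)
    -- (d): u* minimizes L2(·, λ); H = ∇²_{uu}L2(u*, λ) invertible, ‖H⁻¹‖ ≤ 1/μ2, ‖J‖ ≤ ℓ21
    (uStar : EuclideanSpace ℝ (Fin d))
    (huStar : ∀ u, L2 uStar lam ≤ L2 u lam)
    (Hinv : EuclideanSpace ℝ (Fin d) →L[ℝ] EuclideanSpace ℝ (Fin d))
    (hHinv1 : (Hf uStar).comp Hinv = ContinuousLinearMap.id ℝ (EuclideanSpace ℝ (Fin d)))
    (hHinv2 : Hinv.comp (Hf uStar) = ContinuousLinearMap.id ℝ (EuclideanSpace ℝ (Fin d)))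
    (hHinvNorm : ‖Hinv‖ ≤ 1 / μ2)
    (hJnorm : ‖Jf uStar‖ ≤ ℓ21)
    -- (e): ω*_α is a stationary point of L1(·, λ) + αL2(·, λ), close to u*
    (ωα : EuclideanSpace ℝ (Fin d))
    (hωαStat : gradient (fun ω => L1 ω lam + α * L2 ω lam) ωα = 0)
    (hωαClose : ‖ωα - uStar‖ ≤ ℓ10 / (μ2 * α)) :
    ‖(gradient (fun l => L1 uStar l) lam -
          Jf uStar (Hinv (gradient (fun v => L1 v lam) uStar))) -
        (gradient (fun l => L1 ωα l) lam +
          α • (gradient (fun l => L2 ωα l) lam - gradient (fun l => L2 uStar l) lam))‖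
      ≤ (ℓ11 + ℓ10 * ℓ22 / (2 * μ2)) * (1 + ℓ21 / μ2) * (ℓ10 / (μ2 * α)) := by
  have hdL1u : Differentiable ℝ (fun v : EuclideanSpace ℝ (Fin d) => L1 v lam) := by
    have h := hL1smooth.differentiable two_ne_zero
    exact fun v => by have := (h (v, lam)).comp v (DifferentiableAt.prodMk (differentiableAt_id (𝕜 := ℝ) (x := v)) (differentiableAt_const lam)); exact this
  have hdL2u : Differentiable ℝ (fun v : EuclideanSpace ℝ (Fin d) => L2 v lam) := by
    have h := hL2smooth.differentiable two_ne_zero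
    exact fun v => by have := (h (v, lam)).comp v (DifferentiableAt.prodMk (differentiableAt_id (𝕜 := ℝ) (x := v)) (differentiableAt_const lam)); exact this
  -- (F1): ∇_u L2(u*, λ) = 0
  have hF1 : gradient (fun v => L2 v lam) uStar = 0 := by
    have hmin : IsLocalMin (fun v => L2 v lam) uStar := Filter.Eventually.of_forall huStar
    have hgr := (hdL2u uStar).hasGradientAt
    have h0 : (InnerProductSpace.toDual ℝ (EuclideanSpace ℝ (Fin d)))
        (gradient (fun v => L2 v lam) uStar) = 0 :=
      hmin.hasFDerivAt_eq_zero hgr.hasFDerivAt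
    have := congrArg (InnerProductSpace.toDual ℝ (EuclideanSpace ℝ (Fin d))).symm h0
    simpa only [LinearIsometryEquiv.symm_apply_apply, map_zero] using this
  -- (F2): stationarity of ωα
  have hF2 : gradient (fun v => L1 v lam) ωα + α • gradient (fun v => L2 v lam) ωα = 0 := by
    have h1 := ((hdL1u ωα).hasGradientAt).hasFDerivAt
    have h2 := ((hdL2u ωα).hasGradientAt).hasFDerivAt
    have hsum : HasFDerivAt (fun ω => L1 ω lam + α * L2 ω lam)
        ((InnerProductSpace.toDual ℝ (EuclideanSpace ℝ (Fin d)))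
            (gradient (fun v => L1 v lam) ωα) +
          α • (InnerProductSpace.toDual ℝ (EuclideanSpace ℝ (Fin d)))
            (gradient (fun v => L2 v lam) ωα)) ωα :=
      h1.add (h2.const_mul α)
    have hG : HasGradientAt (fun ω => L1 ω lam + α * L2 ω lam)
        (gradient (fun v => L1 v lam) ωα + α • gradient (fun v => L2 v lam) ωα) ωα := by
      rw [hasGradientAt_iff_hasFDerivAt, map_add, map_smul]
      exact hsum
    rw [← hG.gradient]
    exact hωαStat
  -- Hinv inverts H
  have hinvH : ∀ x, Hinv (Hf uStar x) = x := fun x => by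
    have := DFunLike.congr_fun hHinv2 x
    simpa using this
  -- rewrite via the key identity
  rw [key_identity (Jf uStar) Hinv (Hf uStar)
      (gradient (fun l => L1 uStar l) lam) (gradient (fun l => L1 ωα l) lam)
      (gradient (fun l => L2 uStar l) lam) (gradient (fun l => L2 ωα l) lam)
      (gradient (fun v => L1 v lam) uStar) (gradient (fun v => L1 v lam) ωα)
      (gradient (fun v => L2 v lam) ωα) (ωα - uStar) α hinvH hF2]
  -- Taylor remainder bounds
  have he1 : ‖gradient (fun l => L2 ωα l) lam - gradient (fun l => L2 uStar l) lam -
      Jf uStar (ωα - uStar)‖ ≤ ℓ22 / 2 * ‖ωα - uStar‖ ^ 2 := hJtaylor uStar ωα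
  have he2 : ‖gradient (fun v => L2 v lam) ωα - Hf uStar (ωα - uStar)‖
      ≤ ℓ22 / 2 * ‖ωα - uStar‖ ^ 2 := by
    have h := hHtaylor uStar ωα
    rw [hF1, sub_zero] at h
    exact h
  set e1 := gradient (fun l => L2 ωα l) lam - gradient (fun l => L2 uStar l) lam -
      Jf uStar (ωα - uStar) with he1def
  set e2 := gradient (fun v => L2 v lam) ωα - Hf uStar (ωα - uStar) with he2def
  set A := gradient (fun l => L1 uStar l) lam with hA
  set B := gradient (fun l => L1 ωα l) lam with hB
  set C := gradient (fun v => L1 v lam) uStar with hC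
  set D := gradient (fun v => L1 v lam) ωα with hD
  set r := ‖ωα - uStar‖ with hr
  have hr0 : (0:ℝ) ≤ r := hr ▸ norm_nonneg _
  clear_value e1 e2 A B C D r
  have hrR : r ≤ ℓ10 / (μ2 * α) := hωαClose
  have hab : ‖A - B‖ ≤ ℓ11 * r := by
    rw [hA, hB, hr]
    have h := hgl1lip uStar ωα
    rwa [norm_sub_rev (uStar : EuclideanSpace ℝ (Fin d)) ωα] at h
  have hdc : ‖D - C‖ ≤ ℓ11 * r := by
    rw [hD, hC, hr]; exact hgu1lip ωα uStar
  have hJHinv : ∀ x, ‖Jf uStar (Hinv x)‖ ≤ ℓ21 / μ2 * ‖x‖ := fun x => by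
    calc ‖Jf uStar (Hinv x)‖ ≤ ‖Jf uStar‖ * ‖Hinv x‖ := (Jf uStar).le_opNorm _
      _ ≤ ℓ21 * (‖Hinv‖ * ‖x‖) :=
          mul_le_mul hJnorm (Hinv.le_opNorm x) (norm_nonneg _) hℓ21
      _ ≤ ℓ21 * ((1 / μ2) * ‖x‖) :=
          mul_le_mul_of_nonneg_left
            (mul_le_mul_of_nonneg_right hHinvNorm (norm_nonneg _)) hℓ21
      _ = ℓ21 / μ2 * ‖x‖ := by ring
  have hx_bd : ‖(D - C) + α • e2‖ ≤ ℓ11 * r + α * (ℓ22 / 2 * r ^ 2) := by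
    calc ‖(D - C) + α • e2‖ ≤ ‖D - C‖ + ‖α • e2‖ := norm_add_le _ _
      _ ≤ ℓ11 * r + α * (ℓ22 / 2 * r ^ 2) := by
          refine add_le_add hdc ?_
          rw [norm_smul, Real.norm_eq_abs, abs_of_pos hα]
          exact mul_le_mul_of_nonneg_left he2 hα.le
  have htri : ‖(A - B) + Jf uStar (Hinv ((D - C) + α • e2)) - α • e1‖ ≤
      ℓ11 * r + ℓ21 / μ2 * (ℓ11 * r + α * (ℓ22 / 2 * r ^ 2)) + α * (ℓ22 / 2 * r ^ 2) := by
    calc ‖(A - B) + Jf uStar (Hinv ((D - C) + α • e2)) - α • e1‖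
        ≤ ‖(A - B) + Jf uStar (Hinv ((D - C) + α • e2))‖ + ‖α • e1‖ := norm_sub_le _ _
      _ ≤ ‖A - B‖ + ‖Jf uStar (Hinv ((D - C) + α • e2))‖ + ‖α • e1‖ := by
          gcongr
          exact norm_add_le _ _
      _ ≤ ℓ11 * r + ℓ21 / μ2 * (ℓ11 * r + α * (ℓ22 / 2 * r ^ 2)) + α * (ℓ22 / 2 * r ^ 2) := by
          refine add_le_add (add_le_add hab ?_) ?_
          · exact le_trans (hJHinv _) (mul_le_mul_of_nonneg_left hx_bd (by positivity))
          · rw [norm_smul, Real.norm_eq_abs, abs_of_pos hα]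
            exact mul_le_mul_of_nonneg_left he1 hα.le
  refine le_trans htri ?_
  have hαr : α * r ≤ ℓ10 / μ2 := by
    have h1 : α * r ≤ α * (ℓ10 / (μ2 * α)) := mul_le_mul_of_nonneg_left hrR hα.le
    have h2 : α * (ℓ10 / (μ2 * α)) = ℓ10 / μ2 := by field_simp
    linarith
  have hstep : α * (ℓ22 / 2 * r ^ 2) ≤ ℓ10 * ℓ22 / (2 * μ2) * r := by
    have h0 : α * (ℓ22 / 2 * r ^ 2) = (ℓ22 / 2) * ((α * r) * r) := by ring
    rw [h0]
    calc (ℓ22 / 2) * ((α * r) * r) ≤ (ℓ22 / 2) * ((ℓ10 / μ2) * r) :=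
          mul_le_mul_of_nonneg_left (mul_le_mul_of_nonneg_right hαr hr0) (by positivity)
      _ = ℓ10 * ℓ22 / (2 * μ2) * r := by ring
  have hmain : ℓ11 * r + ℓ21 / μ2 * (ℓ11 * r + α * (ℓ22 / 2 * r ^ 2)) +
      α * (ℓ22 / 2 * r ^ 2) ≤ (ℓ11 + ℓ10 * ℓ22 / (2 * μ2)) * (1 + ℓ21 / μ2) * r := by
    have h21 : (0:ℝ) ≤ ℓ21 / μ2 := by positivity
    have h2 := mul_le_mul_of_nonneg_left hstep h21
    nlinarith [h2, hstep]
  refine le_trans hmain ?_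
  exact mul_le_mul_of_nonneg_left hrR (by positivity)

end
end
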